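/- If C is a category with pullbacks and S : C → Set preserves pullbacks, then CM^p(C;S), with datatypes S₀(a) and partial-function classes S[a,b] = {S₁(i,f) : i ∈ C(↪ a), f : dom(i) → b}, is a computability model: it contains all identities and is closed under composition of partial functions. -/

import Mathlib

open CategoryTheory Limits

universe w v u

/-- The partial function `S₁(i, f) : S₀(a) ⇀ S₀(b)` determined by a partial
morphism `(i, f) : a ⇀ b`: its domain is the image of `S₁(i)`, with value
`S₁(f)(x)` at `S₁(i)(x)`. -/
noncomputable def SPart {C : Type u} [Category.{v} C] (S : C ⥤ Type w) {s a b : C}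
    (i : s ⟶ a) (f : s ⟶ b) : S.obj a →. S.obj b :=
  fun x => ⟨∃ y, S.map i y = x, fun h => S.map f h.choose⟩

/-- The class `S[a,b] = {S₁(i,f) : i : s ↪ a mono, f : s ⟶ b}` of partial
functions of the computability model `CM^p(C;S)`. -/
def SPartClass {C : Type u} [Category.{v} C] (S : C ⥤ Type w) (a b : C) :
    Set (S.obj a →. S.obj b) :=
  {p | ∃ (s : C) (i : s ⟶ a) (f : s ⟶ b), Mono i ∧ p = SPart S i f}

section Aux

variable {C : Type u} [Category.{v} C] [HasPullbacks C]
  (S : C ⥤ Type w) [PreservesLimitsOfShape WalkingCospan S]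

/-- Surjectivity part of preservation of pullbacks, stated elementwise. -/
lemma SPull_surj {s t b : C} (f : s ⟶ b) (j : t ⟶ b) (x : S.obj s) (y : S.obj t)
    (h : S.map f x = S.map j y) :
    ∃ w, S.map (pullback.fst f j) w = x ∧ S.map (pullback.snd f j) w = y := by
  let e := PullbackCone.IsLimit.equivPullbackObj
    (isLimitOfHasPullbackOfPreservesLimit S f j)
  refine ⟨e.symm ⟨(x, y), h⟩, ?_, ?_⟩
  · exact PullbackCone.IsLimit.equivPullbackObj_symm_apply_fst
      (isLimitOfHasPullbackOfPreservesLimit S f j) ⟨(x, y), h⟩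
  · exact PullbackCone.IsLimit.equivPullbackObj_symm_apply_snd
      (isLimitOfHasPullbackOfPreservesLimit S f j) ⟨(x, y), h⟩

/-- A pullback-preserving functor to `Type` sends monos to injective maps. -/
lemma SMap_inj {s a : C} (i : s ⟶ a) [Mono i] : Function.Injective (S.map i) := by
  intro u u' h
  obtain ⟨w, hw1, hw2⟩ := SPull_surj S i i u u' h
  have hfs : pullback.fst i i = pullback.snd i i := by
    rw [← cancel_mono i]; exact pullback.condition
  rw [← hw1, ← hw2, hfs]

omit [HasPullbacks C] [PreservesLimitsOfShape WalkingCospan S] in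
lemma mem_SPart {s a b : C} (i : s ⟶ a) (f : s ⟶ b)
    (inj : Function.Injective (S.map i)) (x : S.obj a) (v : S.obj b) :
    v ∈ SPart S i f x ↔ ∃ u, S.map i u = x ∧ S.map f u = v := by
  constructor
  · rintro ⟨h, rfl⟩
    exact ⟨h.choose, h.choose_spec, rfl⟩
  · rintro ⟨u, hu, rfl⟩
    have h : ∃ y, S.map i y = x := ⟨u, hu⟩
    exact ⟨h, congrArg (S.map f) (inj (h.choose_spec.trans hu.symm))⟩

end Aux

/-- if `C` has pullbacks and `S : C ⥤ Set` preserves pullbacks,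
then `CM^p(C;S)`, with datatypes `S₀(a)` and partial-function classes
`S[a,b] = {S₁(i,f)}`, is a computability model: it contains all identity
partial functions and is closed under composition of partial functions. -/
theorem CMp_is_computability_model {C : Type u} [Category.{v} C] [HasPullbacks C]
    (S : C ⥤ Type w) [PreservesLimitsOfShape WalkingCospan S] :
    (∀ a : C, PFun.id (S.obj a) ∈ SPartClass S a a) ∧
    (∀ a b c : C, ∀ p ∈ SPartClass S a b, ∀ q ∈ SPartClass S b c,
      q.comp p ∈ SPartClass S a c) := by
  constructor
  · intro a
    refine ⟨a, 𝟙 a, 𝟙 a, inferInstance, ?_⟩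
    funext x
    apply Part.ext
    intro v
    rw [mem_SPart S _ _ (SMap_inj S (𝟙 a))]
    simp only [FunctorToTypes.map_id_apply, PFun.id, Part.mem_some_iff]
    constructor
    · rintro rfl; exact ⟨v, rfl, rfl⟩
    · rintro ⟨u, rfl, rfl⟩; rfl
  · rintro a b c p ⟨s, i, f, hi, rfl⟩ q ⟨t, j, g, hj, rfl⟩
    haveI := hi; haveI := hj
    refine ⟨pullback f j, pullback.fst f j ≫ i, pullback.snd f j ≫ g,
      inferInstance, ?_⟩
    funext x
    apply Part.ext
    intro v
    rw [PFun.comp_apply]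
    refine (Part.mem_bind_iff (f := SPart S i f x) (g := fun z => SPart S j g z)).trans ?_
    rw [mem_SPart S _ _ (SMap_inj S (pullback.fst f j ≫ i))]
    constructor
    · rintro ⟨z, hz, hv⟩
      rw [mem_SPart S _ _ (SMap_inj S i)] at hz
      rw [mem_SPart S _ _ (SMap_inj S j)] at hv
      obtain ⟨u, hu, rfl⟩ := hz
      obtain ⟨t', ht', rfl⟩ := hv
      obtain ⟨w, hw1, hw2⟩ := SPull_surj S f j u t' ht'.symm
      refine ⟨w, ?_, ?_⟩
      · rw [FunctorToTypes.map_comp_apply, hw1, hu]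
      · rw [FunctorToTypes.map_comp_apply, hw2]
    · rintro ⟨w, hx, hv⟩
      refine ⟨S.map f (S.map (pullback.fst f j) w), ?_, ?_⟩
      · rw [mem_SPart S _ _ (SMap_inj S i)]
        exact ⟨S.map (pullback.fst f j) w,
          by rw [← FunctorToTypes.map_comp_apply]; exact hx, rfl⟩
      · rw [mem_SPart S _ _ (SMap_inj S j)]
        refine ⟨S.map (pullback.snd f j) w, ?_, ?_⟩
        · rw [← FunctorToTypes.map_comp_apply, ← FunctorToTypes.map_comp_apply,
            pullback.condition]
        · rw [← FunctorToTypes.map_comp_apply]; exact hv
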